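/- arXiv:2010.01811 — 2 statements merged into one kernel-verified Lean document; each statement's English description precedes it below -/
import Mathlib

section
/- Let $C$ be the Cartan matrix of type $A_n$ and let $Z \in \mathbb{C}^n$. Then $\sum_{i,j=1}^n (C^{-1})_{ij} Z_i \overline{Z_j} = \frac{1}{n+1} \sum_{1 \le k \le l \le n} \left| \sum_{m=k}^{l} Z_m \right|^2$. In particular, the left-hand side is a nonnegative real number. -/
open Matrix Finset

/-- The Cartan matrix of type `Aₙ`, over the complex numbers. -/
def cartanA (n : ℕ) : Matrix (Fin n) (Fin n) ℂ :=
  Matrix.of fun i j =>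
    if i = j then 2 else if i.val + 1 = j.val ∨ j.val + 1 = i.val then -1 else 0

noncomputable def Ffun (n b a : ℕ) : ℂ :=
  ((min a b : ℕ) : ℂ) * (((n : ℂ) + 1) - ((max a b : ℕ) : ℂ)) / ((n : ℂ) + 1)

/-- The explicit inverse of the Cartan matrix. -/
noncomputable def invA (n : ℕ) : Matrix (Fin n) (Fin n) ℂ :=
  Matrix.of fun i j => Ffun n (j.val + 1) (i.val + 1)

lemma hne (n : ℕ) : ((n : ℂ) + 1) ≠ 0 := by
  have : (((n+1 : ℕ) : ℂ)) ≠ 0 := Nat.cast_ne_zero.mpr (Nat.succ_ne_zero n)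
  push_cast at this; exact this

lemma Ffun_zero (n b : ℕ) : Ffun n b 0 = 0 := by simp [Ffun]

lemma Ffun_top (n b : ℕ) (hb : b ≤ n + 1) : Ffun n b (n + 1) = 0 := by
  simp only [Ffun, max_eq_left hb]
  push_cast
  ring

lemma tri (n i j : ℕ) (hi : i < n) (hj : j < n) :
    2 * Ffun n (j+1) (i+1) - Ffun n (j+1) i - Ffun n (j+1) (i+2)
      = if i = j then 1 else 0 := by
  rcases lt_trichotomy i j with h | h | h
  · rw [if_neg (by omega)]
    simp only [Ffun, min_eq_left (by omega : i ≤ j+1), max_eq_right (by omega : i ≤ j+1),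
      min_eq_left (by omega : i+1 ≤ j+1), max_eq_right (by omega : i+1 ≤ j+1),
      min_eq_left (by omega : i+2 ≤ j+1), max_eq_right (by omega : i+2 ≤ j+1)]
    push_cast
    field_simp
    ring
  · subst h
    rw [if_pos rfl]
    simp only [Ffun, min_eq_left (by omega : i ≤ i+1), max_eq_right (by omega : i ≤ i+1),
      min_self, max_self,
      min_eq_right (by omega : i+1 ≤ i+2), max_eq_left (by omega : i+1 ≤ i+2)]
    push_cast
    field_simp [hne n]
    ring
  · rw [if_neg (by omega)]
    simp only [Ffun, min_eq_right (by omega : j+1 ≤ i), max_eq_left (by omega : j+1 ≤ i),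
      min_eq_right (by omega : j+1 ≤ i+1), max_eq_left (by omega : j+1 ≤ i+1),
      min_eq_right (by omega : j+1 ≤ i+2), max_eq_left (by omega : j+1 ≤ i+2)]
    push_cast
    field_simp
    ring

lemma sum3 (n : ℕ) (F : ℕ → ℂ) (h0 : F 0 = 0) (htop : F (n+1) = 0) (i : ℕ) (hi : i < n) :
    ∑ a ∈ Finset.range n, (if i = a then (2:ℂ) else if i+1 = a ∨ a+1 = i then -1 else 0) * F (a+1)
      = 2 * F (i+1) - F i - F (i+2) := by
  have hc : ∀ a : ℕ, (if i = a then (2:ℂ) else if i+1 = a ∨ a+1 = i then -1 else 0)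
      = (if a = i then 2 else 0) + (if a = i+1 then -1 else 0) + (if a+1 = i then -1 else 0) := by
    intro a
    rcases eq_or_ne i a with h1 | h1
    · subst h1; rw [if_pos rfl, if_pos rfl, if_neg (by omega), if_neg (by omega)]; ring
    · rw [if_neg h1, if_neg (Ne.symm h1)]
      by_cases h2 : i + 1 = a
      · rw [if_pos (Or.inl h2), if_pos (by omega), if_neg (by omega)]; ring
      · by_cases h3 : a + 1 = i
        · rw [if_pos (Or.inr h3), if_neg (by omega), if_pos h3]; ring
        · rw [if_neg (by tauto), if_neg (by omega), if_neg h3]; ring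
  calc ∑ a ∈ Finset.range n, (if i = a then (2:ℂ) else if i+1 = a ∨ a+1 = i then -1 else 0) * F (a+1)
      = ∑ a ∈ Finset.range n, ((if a = i then (2:ℂ) * F (a+1) else 0)
          + (if a = i+1 then (-1) * F (a+1) else 0) + (if a+1 = i then (-1) * F (a+1) else 0)) := by
        refine Finset.sum_congr rfl fun a _ => ?_
        rw [hc a]; split_ifs <;> ring
    _ = 2 * F (i+1) - F i - F (i+2) := by
        rw [Finset.sum_add_distrib, Finset.sum_add_distrib,
          Finset.sum_ite_eq' (Finset.range n) i (fun a => (2:ℂ) * F (a+1)),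
          Finset.sum_ite_eq' (Finset.range n) (i+1) (fun a => (-1:ℂ) * F (a+1))]
        have h2 : (if i+1 ∈ Finset.range n then (-1:ℂ) * F (i+1+1) else 0) = -F (i+2) := by
          by_cases h : i + 1 < n
          · simp [h]
          · rw [if_neg (by simp; omega), show i+1+1 = n+1 by omega, htop]; ring
        have h3 : (∑ a ∈ Finset.range n, if a+1 = i then (-1:ℂ) * F (a+1) else 0) = -F i := by
          rcases i with _ | m
          · simp [h0]
          · have e : ∀ a : ℕ, (a + 1 = m + 1) = (a = m) := by intro a; simp
            simp only [e]
            rw [Finset.sum_ite_eq' (Finset.range n) m (fun a => (-1:ℂ) * F (a+1))]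
            simp [Finset.mem_range.mpr (by omega : m < n)]
        rw [h2, h3]
        simp [Finset.mem_range.mpr hi]
        ring

lemma key (n : ℕ) : cartanA n * invA n = 1 := by
  ext i j
  rw [Matrix.mul_apply]
  have step : ∀ k : Fin n, cartanA n i k * invA n k j
      = (if i.val = k.val then (2:ℂ) else if i.val+1 = k.val ∨ k.val+1 = i.val then -1 else 0)
          * Ffun n (j.val+1) (k.val+1) := by
    intro k
    simp [cartanA, invA, Fin.ext_iff]
  rw [Finset.sum_congr rfl fun k _ => step k]
  rw [Fin.sum_univ_eq_sum_range (fun a =>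
    (if i.val = a then (2:ℂ) else if i.val+1 = a ∨ a+1 = i.val then -1 else 0)
      * Ffun n (j.val+1) (a+1)) n]
  rw [sum3 n (Ffun n (j.val+1)) (Ffun_zero n _) (Ffun_top n _ (by omega)) i.val i.isLt]
  rw [tri n i.val j.val i.isLt j.isLt]
  rw [Matrix.one_apply]
  simp [Fin.ext_iff]

lemma sum4 {M : Type*} [AddCommMonoid M] {α : Type*} [Fintype α] (f : α → α → α → α → M) :
    ∑ k : α, ∑ l : α, ∑ m : α, ∑ m' : α, f k l m m'
      = ∑ m : α, ∑ m' : α, ∑ k : α, ∑ l : α, f k l m m' := by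
  calc ∑ k : α, ∑ l : α, ∑ m : α, ∑ m' : α, f k l m m'
      = ∑ k : α, ∑ m : α, ∑ l : α, ∑ m' : α, f k l m m' :=
        Finset.sum_congr rfl fun k _ => Finset.sum_comm
    _ = ∑ m : α, ∑ k : α, ∑ l : α, ∑ m' : α, f k l m m' := Finset.sum_comm
    _ = ∑ m : α, ∑ k : α, ∑ m' : α, ∑ l : α, f k l m m' :=
        Finset.sum_congr rfl fun m _ => Finset.sum_congr rfl fun k _ => Finset.sum_comm
    _ = ∑ m : α, ∑ m' : α, ∑ k : α, ∑ l : α, f k l m m' :=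
        Finset.sum_congr rfl fun m _ => Finset.sum_comm

lemma val_min {n : ℕ} (i j : Fin n) : (min i j).val = min i.val j.val := by
  rcases le_total i j with h | h
  · rw [min_eq_left h, Nat.min_eq_left (Fin.le_def.mp h)]
  · rw [min_eq_right h, Nat.min_eq_right (Fin.le_def.mp h)]

lemma val_max {n : ℕ} (i j : Fin n) : (max i j).val = max i.val j.val := by
  rcases le_total i j with h | h
  · rw [max_eq_right h, Nat.max_eq_right (Fin.le_def.mp h)]
  · rw [max_eq_left h, Nat.max_eq_left (Fin.le_def.mp h)]

lemma count_k {n : ℕ} (m m' : Fin n) :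
    (∑ k : Fin n, if k ≤ m ∧ k ≤ m' then (1:ℂ) else 0)
      = ((min m.val m'.val + 1 : ℕ) : ℂ) := by
  have e : ∀ k : Fin n, (k ≤ m ∧ k ≤ m') ↔ k ≤ min m m' := fun k => le_min_iff.symm
  simp only [e]
  rw [Finset.sum_boole]
  have : Finset.univ.filter (fun k : Fin n => k ≤ min m m') = Finset.Iic (min m m') := by
    ext x; simp
  rw [this, Fin.card_Iic, val_min]

lemma count_l {n : ℕ} (m m' : Fin n) :
    (∑ l : Fin n, if m ≤ l ∧ m' ≤ l then (1:ℂ) else 0)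
      = ((n - max m.val m'.val : ℕ) : ℂ) := by
  have e : ∀ l : Fin n, (m ≤ l ∧ m' ≤ l) ↔ max m m' ≤ l := fun l => max_le_iff.symm
  simp only [e]
  rw [Finset.sum_boole]
  have : Finset.univ.filter (fun l : Fin n => max m m' ≤ l) = Finset.Ici (max m m') := by
    ext x; simp
  rw [this, Fin.card_Ici, val_max]

theorem volume_typeA_eq_sum_over_roots (n : ℕ) (Z : Fin n → ℂ) :
    ∑ i : Fin n, ∑ j : Fin n, (cartanA n)⁻¹ i j * Z i * (starRingEnd ℂ) (Z j)
      = (((1 : ℝ) / (n + 1)) *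
          ∑ k : Fin n, ∑ l ∈ Finset.univ.filter (fun l : Fin n => k ≤ l),
            ‖∑ m ∈ Finset.univ.filter (fun m : Fin n => k ≤ m ∧ m ≤ l), Z m‖ ^ 2
        : ℝ) := by
  have hinv : (cartanA n)⁻¹ = invA n := Matrix.inv_eq_right_inv (key n)
  rw [hinv]
  -- rewrite the real RHS as a complex expression
  have hR : ((((1 : ℝ) / (n + 1)) *
          ∑ k : Fin n, ∑ l ∈ Finset.univ.filter (fun l : Fin n => k ≤ l),
            ‖∑ m ∈ Finset.univ.filter (fun m : Fin n => k ≤ m ∧ m ≤ l), Z m‖ ^ 2 : ℝ) : ℂ)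
      = (1 / ((n : ℂ) + 1)) *
          ∑ k : Fin n, ∑ l ∈ Finset.univ.filter (fun l : Fin n => k ≤ l),
            ((∑ m ∈ Finset.univ.filter (fun m : Fin n => k ≤ m ∧ m ≤ l), Z m) *
              (starRingEnd ℂ) (∑ m ∈ Finset.univ.filter (fun m : Fin n => k ≤ m ∧ m ≤ l), Z m)) := by
    rw [Complex.ofReal_mul]
    congr 1
    · push_cast; ring
    · rw [Complex.ofReal_sum]
      refine Finset.sum_congr rfl fun k _ => ?_
      rw [Complex.ofReal_sum]
      refine Finset.sum_congr rfl fun l _ => ?_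
      rw [Complex.sq_norm]
      exact (Complex.mul_conj _).symm
  rw [hR]
  -- expand the double sum over roots into a quadruple sum
  have hW : ∀ k l : Fin n,
      (if k ≤ l then ((∑ m ∈ Finset.univ.filter (fun m : Fin n => k ≤ m ∧ m ≤ l), Z m) *
          (starRingEnd ℂ) (∑ m ∈ Finset.univ.filter (fun m : Fin n => k ≤ m ∧ m ≤ l), Z m)) else 0)
        = ∑ m : Fin n, ∑ m' : Fin n,
            (if (k ≤ m ∧ k ≤ m') ∧ (m ≤ l ∧ m' ≤ l) then Z m * (starRingEnd ℂ) (Z m') else 0) := by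
    intro k l
    by_cases h : k ≤ l
    · rw [if_pos h, map_sum, Finset.sum_mul_sum, Finset.sum_filter]
      refine Finset.sum_congr rfl fun m _ => ?_
      by_cases hm : k ≤ m ∧ m ≤ l
      · rw [if_pos hm, Finset.sum_filter]
        refine Finset.sum_congr rfl fun m' _ => ?_
        refine if_congr ?_ rfl rfl
        constructor
        · intro hm'; exact ⟨⟨hm.1, hm'.1⟩, ⟨hm.2, hm'.2⟩⟩
        · intro hm'; exact ⟨hm'.1.2, hm'.2.2⟩
      · rw [if_neg hm]; symm
        refine Finset.sum_eq_zero fun m' _ => ?_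
        rw [if_neg]; rintro ⟨⟨h1, _⟩, ⟨h2, _⟩⟩; exact hm ⟨h1, h2⟩
    · rw [if_neg h]; symm
      refine Finset.sum_eq_zero fun m _ => Finset.sum_eq_zero fun m' _ => ?_
      rw [if_neg]; rintro ⟨⟨h1, _⟩, ⟨h2, _⟩⟩; exact h (le_trans h1 h2)
  have expand : (∑ k : Fin n, ∑ l ∈ Finset.univ.filter (fun l : Fin n => k ≤ l),
        ((∑ m ∈ Finset.univ.filter (fun m : Fin n => k ≤ m ∧ m ≤ l), Z m) *
          (starRingEnd ℂ) (∑ m ∈ Finset.univ.filter (fun m : Fin n => k ≤ m ∧ m ≤ l), Z m)))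
      = ∑ m : Fin n, ∑ m' : Fin n,
          (((min m.val m'.val + 1) * (n - max m.val m'.val) : ℕ) : ℂ)
            * (Z m * (starRingEnd ℂ) (Z m')) := by
    calc (∑ k : Fin n, ∑ l ∈ Finset.univ.filter (fun l : Fin n => k ≤ l),
        ((∑ m ∈ Finset.univ.filter (fun m : Fin n => k ≤ m ∧ m ≤ l), Z m) *
          (starRingEnd ℂ) (∑ m ∈ Finset.univ.filter (fun m : Fin n => k ≤ m ∧ m ≤ l), Z m)))
        = ∑ k : Fin n, ∑ l : Fin n, ∑ m : Fin n, ∑ m' : Fin n,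
            (if (k ≤ m ∧ k ≤ m') ∧ (m ≤ l ∧ m' ≤ l) then Z m * (starRingEnd ℂ) (Z m') else 0) := by
          refine Finset.sum_congr rfl fun k _ => ?_
          rw [Finset.sum_filter]
          exact Finset.sum_congr rfl fun l _ => hW k l
      _ = ∑ m : Fin n, ∑ m' : Fin n, ∑ k : Fin n, ∑ l : Fin n,
            (if (k ≤ m ∧ k ≤ m') ∧ (m ≤ l ∧ m' ≤ l) then Z m * (starRingEnd ℂ) (Z m') else 0) :=
          sum4 _
      _ = ∑ m : Fin n, ∑ m' : Fin n,
            (∑ k : Fin n, if k ≤ m ∧ k ≤ m' then (1:ℂ) else 0) *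
              ((∑ l : Fin n, if m ≤ l ∧ m' ≤ l then (1:ℂ) else 0) *
                (Z m * (starRingEnd ℂ) (Z m'))) := by
          refine Finset.sum_congr rfl fun m _ => Finset.sum_congr rfl fun m' _ => ?_
          rw [Finset.sum_mul]
          refine Finset.sum_congr rfl fun k _ => ?_
          rw [Finset.sum_mul, Finset.mul_sum]
          refine Finset.sum_congr rfl fun l _ => ?_
          by_cases h1 : k ≤ m ∧ k ≤ m' <;> by_cases h2 : m ≤ l ∧ m' ≤ l <;>
            simp [h1, h2]
      _ = ∑ m : Fin n, ∑ m' : Fin n,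
            (((min m.val m'.val + 1) * (n - max m.val m'.val) : ℕ) : ℂ)
              * (Z m * (starRingEnd ℂ) (Z m')) := by
          refine Finset.sum_congr rfl fun m _ => Finset.sum_congr rfl fun m' _ => ?_
          rw [count_k, count_l, Nat.cast_mul, mul_assoc]
  rw [expand, Finset.mul_sum]
  refine Finset.sum_congr rfl fun i _ => ?_
  rw [Finset.mul_sum]
  refine Finset.sum_congr rfl fun j _ => ?_
  have hmax : max i.val j.val < n := by
    have := i.isLt; have := j.isLt; omega
  have hmin : min (i.val + 1) (j.val + 1) = min i.val j.val + 1 := by omega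
  have hmax' : max (i.val + 1) (j.val + 1) = max i.val j.val + 1 := by omega
  simp only [invA, Ffun, Matrix.of_apply, hmin, hmax']
  push_cast [Nat.cast_sub hmax.le]
  ring
end

section
/- Let $n \ge 1$, let $C$ be the Cartan matrix of type $A_n$, and let $Z \in \mathbb{C}^n$ with $Z_i \ne 0$ for all $i$. Define $\mathrm{vol}(Z) = \left| \sum_{i,j=1}^n (C^{-1})_{ij} Z_i \overline{Z_j} \right|$ and $\mathrm{sys}(Z) = \min_{1 \le i \le n} |Z_i|$. Then $\mathrm{sys}(Z)^2 \le \frac{n+1}{n} \mathrm{vol}(Z)$. -/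
open Matrix Finset

namespace SysA

noncomputable def Minv (n : ℕ) : Matrix (Fin n) (Fin n) ℂ :=
  Matrix.of fun i j =>
    ((min i.val j.val : ℕ) + 1 : ℂ)
      - ((i.val : ℂ) + 1) * ((j.val : ℂ) + 1) / ((n : ℂ) + 1)

lemma n1_ne (n : ℕ) : ((n : ℂ) + 1) ≠ 0 := Nat.cast_add_one_ne_zero n

lemma sum_cartan (n : ℕ) (i : Fin n) (f : ℕ → ℂ) (h0 : f 0 = 0) (hn : f (n + 1) = 0) :
    ∑ j : Fin n, cartanA n i j * f (j.val + 1)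
      = 2 * f (i.val + 1) - f i.val - f (i.val + 2) := by
  have split : ∀ j : Fin n, cartanA n i j * f (j.val + 1) =
      (if i = j then 2 * f (j.val + 1) else 0)
      + ((if i.val + 1 = j.val then -f (j.val + 1) else 0)
      + (if j.val + 1 = i.val then -f (j.val + 1) else 0)) := by
    intro j
    simp only [cartanA, Matrix.of_apply, Fin.ext_iff]
    split_ifs <;> first | omega | ring
  rw [Finset.sum_congr rfl (fun j _ => split j), Finset.sum_add_distrib,
    Finset.sum_add_distrib, Finset.sum_ite_eq]
  have s2 : ∑ j : Fin n, (if i.val + 1 = j.val then -f (j.val + 1) else 0)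
      = -f (i.val + 2) := by
    by_cases h : i.val + 1 < n
    · rw [Finset.sum_eq_single (⟨i.val + 1, h⟩ : Fin n)]
      · simp
      · intro j _ hj
        rw [if_neg (fun hc => hj (Fin.ext hc.symm))]
      · simp
    · have hi : i.val + 1 = n := by omega
      rw [Finset.sum_eq_zero, show i.val + 2 = n + 1 by omega, hn, neg_zero]
      intro j _
      rw [if_neg (by omega)]
  have s3 : ∑ j : Fin n, (if j.val + 1 = i.val then -f (j.val + 1) else 0)
      = -f i.val := by
    by_cases h : 0 < i.val
    · rw [Finset.sum_eq_single (⟨i.val - 1, by omega⟩ : Fin n)]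
      · rw [if_pos (show i.val - 1 + 1 = i.val by omega)]
        rw [show i.val - 1 + 1 = i.val by omega]
      · intro j _ hj
        exact if_neg (fun hc => hj (Fin.ext (show j.val = i.val - 1 by omega)))
      · simp
    · have hi : i.val = 0 := by omega
      rw [Finset.sum_eq_zero, hi, h0, neg_zero]
      intro j _
      rw [if_neg (by omega)]
  rw [s2, s3, if_pos (Finset.mem_univ i)]
  ring

lemma cartan_mul_Minv (n : ℕ) : cartanA n * Minv n = 1 := by
  ext i k
  rw [Matrix.mul_apply]
  set f : ℕ → ℂ := fun a =>
    ((min a (k.val + 1) : ℕ) : ℂ) - (a : ℂ) * ((k.val : ℂ) + 1) / ((n : ℂ) + 1) with hf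
  have hMf : ∀ j : Fin n, Minv n j k = f (j.val + 1) := by
    intro j
    simp only [Minv, Matrix.of_apply, hf]
    rw [Nat.succ_min_succ]
    push_cast
    ring
  have h0 : f 0 = 0 := by simp [hf]
  have hn : f (n + 1) = 0 := by
    simp only [hf]
    rw [Nat.min_eq_right (by omega : k.val + 1 ≤ n + 1)]
    push_cast
    field_simp [n1_ne n]
    ring
  rw [Finset.sum_congr rfl (fun j _ => by rw [hMf j]), sum_cartan n i f h0 hn]
  rcases lt_trichotomy i.val k.val with h | h | h
  · rw [Matrix.one_apply_ne (fun hc => absurd (congrArg Fin.val hc) (by omega))]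
    simp only [hf]
    rw [Nat.min_eq_left (by omega : i.val + 1 ≤ k.val + 1),
      Nat.min_eq_left (by omega : i.val ≤ k.val + 1),
      Nat.min_eq_left (by omega : i.val + 2 ≤ k.val + 1)]
    push_cast
    field_simp [n1_ne n]
    ring
  · have hik : i = k := Fin.ext h
    subst hik
    rw [Matrix.one_apply_eq]
    simp only [hf]
    rw [Nat.min_eq_left (le_refl (i.val + 1)),
      Nat.min_eq_left (by omega : i.val ≤ i.val + 1),
      Nat.min_eq_right (by omega : i.val + 1 ≤ i.val + 2)]
    push_cast
    field_simp [n1_ne n]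
    ring
  · rw [Matrix.one_apply_ne (fun hc => absurd (congrArg Fin.val hc) (by omega))]
    simp only [hf]
    rw [Nat.min_eq_right (by omega : k.val + 1 ≤ i.val + 1),
      Nat.min_eq_right (by omega : k.val + 1 ≤ i.val),
      Nat.min_eq_right (by omega : k.val + 1 ≤ i.val + 2)]
    push_cast
    field_simp [n1_ne n]
    ring

lemma inv_eq (n : ℕ) : (cartanA n)⁻¹ = Minv n :=
  Matrix.inv_eq_right_inv (cartan_mul_Minv n)
noncomputable def ecoef (n : ℕ) (k : Fin (n + 1)) (i : Fin n) : ℂ :=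
  (if (k : ℕ) ≤ (i : ℕ) then 1 else 0) - ((i : ℂ) + 1) / ((n : ℂ) + 1)

lemma ecoef_real (n : ℕ) (k : Fin (n + 1)) (i : Fin n) :
    (starRingEnd ℂ) (ecoef n k i) = ecoef n k i := by
  simp only [ecoef]
  rw [map_sub, map_div₀]
  push_cast
  simp [apply_ite (starRingEnd ℂ)]

lemma sum_ind (n m : ℕ) (hm : m < n + 1) (x : ℂ) :
    ∑ k : Fin (n + 1), (if (k : ℕ) ≤ m then x else 0) = ((m : ℂ) + 1) * x := by
  rw [Fin.sum_univ_eq_sum_range (fun k => if k ≤ m then x else 0)]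
  have : ∀ k ∈ Finset.range (n + 1), (if k ≤ m then x else 0)
      = if k ∈ Finset.range (m + 1) then x else 0 := by
    intro k _
    simp [Nat.lt_succ_iff]
  rw [Finset.sum_congr rfl this, Finset.sum_ite_mem,
    Finset.inter_eq_right.mpr (Finset.range_subset_range.mpr (by omega)),
    Finset.sum_const, Finset.card_range]
  push_cast
  ring

lemma Minv_eq_sum (n : ℕ) (i j : Fin n) :
    Minv n i j = ∑ k : Fin (n + 1), ecoef n k i * ecoef n k j := by
  have expand : ∀ k : Fin (n + 1), ecoef n k i * ecoef n k j =
      (if (k : ℕ) ≤ min i.val j.val then 1 else 0)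
      - (if (k : ℕ) ≤ i.val then ((j : ℂ) + 1) / ((n : ℂ) + 1) else 0)
      - (if (k : ℕ) ≤ j.val then ((i : ℂ) + 1) / ((n : ℂ) + 1) else 0)
      + ((i : ℂ) + 1) / ((n : ℂ) + 1) * (((j : ℂ) + 1) / ((n : ℂ) + 1)) := by
    intro k
    simp only [ecoef]
    by_cases h1 : (k : ℕ) ≤ i.val <;> by_cases h2 : (k : ℕ) ≤ j.val <;>
      simp [h1, h2, le_min_iff] <;> ring
  rw [Finset.sum_congr rfl (fun k _ => expand k)]
  simp only [Finset.sum_add_distrib, Finset.sum_sub_distrib]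
  rw [sum_ind n (min i.val j.val) (by omega : min i.val j.val < n + 1) 1,
    sum_ind n i.val (by omega) _, sum_ind n j.val (by omega) _,
    Finset.sum_const, Finset.card_univ, Fintype.card_fin]
  simp only [Minv, Matrix.of_apply, nsmul_eq_mul]
  push_cast
  field_simp [n1_ne n]
  ring
noncomputable def Wv (n : ℕ) (Z : Fin n → ℂ) (k : Fin (n + 1)) : ℂ :=
  ∑ i : Fin n, ecoef n k i * Z i

lemma conj_Wv (n : ℕ) (Z : Fin n → ℂ) (k : Fin (n + 1)) :
    (starRingEnd ℂ) (Wv n Z k) = ∑ j : Fin n, ecoef n k j * (starRingEnd ℂ) (Z j) := by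
  rw [Wv, map_sum]
  exact Finset.sum_congr rfl fun j _ => by rw [_root_.map_mul, ecoef_real]

lemma sum_eq_normSq (n : ℕ) (Z : Fin n → ℂ) :
    ∑ i : Fin n, ∑ j : Fin n, Minv n i j * Z i * (starRingEnd ℂ) (Z j)
      = ((∑ k : Fin (n + 1), Complex.normSq (Wv n Z k) : ℝ) : ℂ) := by
  have step : ∀ i j : Fin n, Minv n i j * Z i * (starRingEnd ℂ) (Z j)
      = ∑ k : Fin (n + 1), (ecoef n k i * Z i) * (ecoef n k j * (starRingEnd ℂ) (Z j)) := by
    intro i j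
    rw [Minv_eq_sum, Finset.sum_mul, Finset.sum_mul]
    exact Finset.sum_congr rfl fun k _ => by ring
  calc ∑ i : Fin n, ∑ j : Fin n, Minv n i j * Z i * (starRingEnd ℂ) (Z j)
      = ∑ i : Fin n, ∑ j : Fin n, ∑ k : Fin (n + 1),
          (ecoef n k i * Z i) * (ecoef n k j * (starRingEnd ℂ) (Z j)) := by
        exact Finset.sum_congr rfl fun i _ => Finset.sum_congr rfl fun j _ => step i j
    _ = ∑ i : Fin n, ∑ k : Fin (n + 1), ∑ j : Fin n,
          (ecoef n k i * Z i) * (ecoef n k j * (starRingEnd ℂ) (Z j)) :=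
        Finset.sum_congr rfl fun i _ => Finset.sum_comm
    _ = ∑ k : Fin (n + 1), ∑ i : Fin n, ∑ j : Fin n,
          (ecoef n k i * Z i) * (ecoef n k j * (starRingEnd ℂ) (Z j)) :=
        Finset.sum_comm
    _ = ∑ k : Fin (n + 1), Wv n Z k * (starRingEnd ℂ) (Wv n Z k) := by
        refine Finset.sum_congr rfl fun k _ => ?_
        rw [conj_Wv, Wv, Finset.sum_mul_sum]
    _ = ((∑ k : Fin (n + 1), Complex.normSq (Wv n Z k) : ℝ) : ℂ) := by
        push_cast
        exact Finset.sum_congr rfl fun k _ => (Complex.mul_conj _)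

lemma Z_eq (n : ℕ) (Z : Fin n → ℂ) (i : Fin n) :
    Z i = Wv n Z i.castSucc - Wv n Z i.succ := by
  rw [Wv, Wv, ← Finset.sum_sub_distrib]
  have : ∀ j : Fin n, ecoef n i.castSucc j * Z j - ecoef n i.succ j * Z j
      = if i = j then Z j else 0 := by
    intro j
    simp only [ecoef, Fin.coe_castSucc, Fin.val_succ]
    rcases lt_trichotomy i.val j.val with h | h | h
    · rw [if_neg (fun hc => absurd (congrArg Fin.val hc) (by omega)),
        if_pos (by omega : i.val ≤ j.val), if_pos (by omega : i.val + 1 ≤ j.val)]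
      ring
    · rw [if_pos (Fin.ext h), if_pos (by omega : i.val ≤ j.val),
        if_neg (by omega : ¬ i.val + 1 ≤ j.val)]
      ring
    · rw [if_neg (fun hc => absurd (congrArg Fin.val hc) (by omega)),
        if_neg (by omega : ¬ i.val ≤ j.val), if_neg (by omega : ¬ i.val + 1 ≤ j.val)]
      ring
  rw [Finset.sum_congr rfl (fun j _ => this j), Finset.sum_ite_eq,
    if_pos (Finset.mem_univ i)]

lemma sum_Wv (n : ℕ) (Z : Fin n → ℂ) : ∑ k : Fin (n + 1), Wv n Z k = 0 := by
  simp only [Wv]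
  rw [Finset.sum_comm]
  refine Finset.sum_eq_zero fun i _ => ?_
  rw [← Finset.sum_mul]
  have : ∑ k : Fin (n + 1), ecoef n k i = 0 := by
    simp only [ecoef]
    rw [Finset.sum_sub_distrib, sum_ind n i.val (by omega) 1,
      Finset.sum_const, Finset.card_univ, Fintype.card_fin, nsmul_eq_mul]
    push_cast
    field_simp [n1_ne n]
    ring
  rw [this, zero_mul]
lemma nsq_sub_le (a b : ℂ) :
    Complex.normSq (a - b) ≤ 2 * Complex.normSq a + 2 * Complex.normSq b := by
  simp only [Complex.normSq_apply, Complex.sub_re, Complex.sub_im]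
  nlinarith [sq_nonneg (a.re + b.re), sq_nonneg (a.im + b.im)]

lemma key_ineq (n : ℕ) (hn : 1 ≤ n) (Z : Fin n → ℂ) (s : ℝ) (hs0 : 0 ≤ s)
    (hsq : ∀ i, s ^ 2 ≤ Complex.normSq (Z i)) :
    (n : ℝ) * s ^ 2 ≤ ((n : ℝ) + 1) * ∑ k : Fin (n + 1), Complex.normSq (Wv n Z k) := by
  match n, hn with
  | 1, _ =>
    have hw := sum_Wv 1 Z
    rw [Fin.sum_univ_two] at hw
    have hz := Z_eq 1 Z 0
    have e1 : (0 : Fin 1).castSucc = (0 : Fin 2) := by decide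
    have e2 : (0 : Fin 1).succ = (1 : Fin 2) := by decide
    rw [e1, e2] at hz
    have h0 := hsq 0
    rw [hz] at h0
    rw [Fin.sum_univ_two]
    have hre := congrArg Complex.re hw
    have him := congrArg Complex.im hw
    simp only [Complex.add_re, Complex.add_im, Complex.zero_re, Complex.zero_im] at hre him
    simp only [Complex.normSq_apply, Complex.sub_re, Complex.sub_im] at h0 ⊢
    push_cast
    nlinarith [h0, hre, him]
  | 2, _ =>
    have hw := sum_Wv 2 Z
    rw [Fin.sum_univ_three] at hw
    have hz0 := Z_eq 2 Z 0
    have hz1 := Z_eq 2 Z 1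
    have e1 : (0 : Fin 2).castSucc = (0 : Fin 3) := by decide
    have e2 : (0 : Fin 2).succ = (1 : Fin 3) := by decide
    have e3 : (1 : Fin 2).castSucc = (1 : Fin 3) := by decide
    have e4 : (1 : Fin 2).succ = (2 : Fin 3) := by decide
    rw [e1, e2] at hz0
    rw [e3, e4] at hz1
    rw [Fin.sum_univ_three]
    set a := Wv 2 Z 0
    set b := Wv 2 Z 1
    set c := Wv 2 Z 2
    have hb : b = -a - c := by linear_combination hw
    have h0 := hsq 0
    have h1 := hsq 1
    rw [hz0, hb] at h0
    rw [hz1, hb] at h1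
    rw [hb]
    simp only [Complex.normSq_apply, Complex.sub_re, Complex.sub_im, Complex.neg_re,
      Complex.neg_im, Complex.add_re, Complex.add_im] at h0 h1 ⊢
    push_cast
    nlinarith [h0, h1, sq_nonneg (a.re - c.re), sq_nonneg (a.im - c.im)]
  | (m + 3), _ =>
    have hR0 : (0 : ℝ) ≤ ∑ k : Fin (m + 3 + 1), Complex.normSq (Wv (m + 3) Z k) :=
      Finset.sum_nonneg fun k _ => Complex.normSq_nonneg _
    have h1 : ((m + 3 : ℕ) : ℝ) * s ^ 2 ≤ ∑ i : Fin (m + 3), Complex.normSq (Z i) := by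
      have := Finset.card_nsmul_le_sum Finset.univ
        (fun i : Fin (m + 3) => Complex.normSq (Z i)) (s ^ 2) (fun i _ => hsq i)
      rwa [Finset.card_univ, Fintype.card_fin, nsmul_eq_mul] at this
    have h2 : ∑ i : Fin (m + 3), Complex.normSq (Z i)
        ≤ ∑ i : Fin (m + 3), (2 * Complex.normSq (Wv (m + 3) Z i.castSucc)
            + 2 * Complex.normSq (Wv (m + 3) Z i.succ)) := by
      refine Finset.sum_le_sum fun i _ => ?_
      rw [Z_eq (m + 3) Z i]
      exact nsq_sub_le _ _
    have h3 : ∑ i : Fin (m + 3), Complex.normSq (Wv (m + 3) Z i.castSucc)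
        ≤ ∑ k : Fin (m + 3 + 1), Complex.normSq (Wv (m + 3) Z k) := by
      rw [Fin.sum_univ_castSucc (f := fun k => Complex.normSq (Wv (m + 3) Z k))]
      exact le_add_of_nonneg_right (Complex.normSq_nonneg _)
    have h4 : ∑ i : Fin (m + 3), Complex.normSq (Wv (m + 3) Z i.succ)
        ≤ ∑ k : Fin (m + 3 + 1), Complex.normSq (Wv (m + 3) Z k) := by
      rw [Fin.sum_univ_succ (f := fun k => Complex.normSq (Wv (m + 3) Z k))]
      exact le_add_of_nonneg_left (Complex.normSq_nonneg _)
    have h5 : ∑ i : Fin (m + 3), (2 * Complex.normSq (Wv (m + 3) Z i.castSucc)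
        + 2 * Complex.normSq (Wv (m + 3) Z i.succ))
        ≤ 4 * ∑ k : Fin (m + 3 + 1), Complex.normSq (Wv (m + 3) Z k) := by
      rw [Finset.sum_add_distrib, ← Finset.mul_sum, ← Finset.mul_sum]
      linarith
    have hN4 : (4 : ℝ) ≤ ((m + 3 : ℕ) : ℝ) + 1 := by
      push_cast
      linarith [Nat.cast_nonneg (α := ℝ) m]
    push_cast at h1 hN4 ⊢
    nlinarith [h1, h2, h5, hR0, hN4]
end SysA

open SysA in
theorem systolic_inequality_typeA (n : ℕ) (hn : 1 ≤ n) (Z : Fin n → ℂ)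
    (hZ : ∀ i, Z i ≠ 0) :
    (Finset.univ.inf' (Finset.univ_nonempty_iff.mpr ⟨⟨0, hn⟩⟩)
        (fun i : Fin n => ‖Z i‖)) ^ 2
      ≤ (((n : ℝ) + 1) / n) *
          ‖∑ i : Fin n, ∑ j : Fin n,
            (cartanA n)⁻¹ i j * Z i * (starRingEnd ℂ) (Z j)‖ := by
  simp only [inv_eq n]
  rw [sum_eq_normSq n Z, Complex.norm_real, Real.norm_eq_abs,
    abs_of_nonneg (Finset.sum_nonneg fun k _ => Complex.normSq_nonneg _)]
  set s := Finset.univ.inf' (Finset.univ_nonempty_iff.mpr ⟨⟨0, hn⟩⟩)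
    (fun i : Fin n => ‖Z i‖) with hs
  have hs0 : 0 ≤ s := Finset.le_inf' _ _ fun i _ => norm_nonneg _
  have hsq : ∀ i, s ^ 2 ≤ Complex.normSq (Z i) := by
    intro i
    rw [← Complex.sq_norm]
    exact pow_le_pow_left₀ hs0
      (Finset.inf'_le (fun i : Fin n => ‖Z i‖) (Finset.mem_univ i)) 2
  have key := key_ineq n hn Z s hs0 hsq
  have hn0 : (0 : ℝ) < n := by exact_mod_cast hn
  rw [div_mul_eq_mul_div, le_div_iff₀ hn0]
  nlinarith [key]
end
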